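/- arXiv:2503.05259 — 3 statements merged into one kernel-verified Lean document; each statement's English description precedes it below -/
import Mathlib

section
/- In G₇, the element z = s·t·u is central, has order 12, and the center of G₇ is exactly the cyclic subgroup generated by z (so Z(G₇) = {1, z, z², …, z¹¹}). -/
set_option maxRecDepth 8000

open Pointwise

namespace Tetra

def rels : Set (FreeGroup (Fin 3)) :=
  { FreeGroup.of 0 ^ 2, FreeGroup.of 1 ^ 3, FreeGroup.of 2 ^ 3,
    FreeGroup.of 0 * FreeGroup.of 1 * FreeGroup.of 2 *
      (FreeGroup.of 1 * FreeGroup.of 2 * FreeGroup.of 0)⁻¹,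
    FreeGroup.of 0 * FreeGroup.of 1 * FreeGroup.of 2 *
      (FreeGroup.of 2 * FreeGroup.of 0 * FreeGroup.of 1)⁻¹ }

/-- The group `G₇ = ⟨s, t, u | s² = t³ = u³ = 1, stu = tus = ust⟩`. -/
abbrev G7 := PresentedGroup rels

def s : G7 := PresentedGroup.of 0
def t : G7 := PresentedGroup.of 1
def u : G7 := PresentedGroup.of 2
def z : G7 := s * t * u

/-! ### The defining relations -/

lemma mk_rel_one {r : FreeGroup (Fin 3)} (h : r ∈ rels) : PresentedGroup.mk rels r = 1 :=
  (QuotientGroup.eq_one_iff _).mpr (Subgroup.subset_normalClosure h)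

lemma zdef : z = s * t * u := rfl

lemma hss : s * s = 1 := by
  have h := mk_rel_one (show (FreeGroup.of 0 ^ 2 : FreeGroup (Fin 3)) ∈ rels by simp [rels])
  rw [map_pow] at h
  rw [pow_two] at h; exact h

lemma httt : t * (t * t) = 1 := by
  have h := mk_rel_one (show (FreeGroup.of 1 ^ 3 : FreeGroup (Fin 3)) ∈ rels by simp [rels])
  rw [map_pow, pow_succ, pow_two, mul_assoc] at h
  exact h

lemma huuu : u * (u * u) = 1 := by
  have h := mk_rel_one (show (FreeGroup.of 2 ^ 3 : FreeGroup (Fin 3)) ∈ rels by simp [rels])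
  rw [map_pow, pow_succ, pow_two, mul_assoc] at h
  exact h

lemma h4 : s * t * u = t * u * s := by
  have h := mk_rel_one (show (FreeGroup.of 0 * FreeGroup.of 1 * FreeGroup.of 2 *
      (FreeGroup.of 1 * FreeGroup.of 2 * FreeGroup.of 0)⁻¹ : FreeGroup (Fin 3)) ∈ rels by
    simp [rels])
  simp only [map_mul, map_inv] at h
  exact mul_inv_eq_one.mp h

lemma h5 : s * t * u = u * s * t := by
  have h := mk_rel_one (show (FreeGroup.of 0 * FreeGroup.of 1 * FreeGroup.of 2 *
      (FreeGroup.of 2 * FreeGroup.of 0 * FreeGroup.of 1)⁻¹ : FreeGroup (Fin 3)) ∈ rels by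
    simp [rels])
  simp only [map_mul, map_inv] at h
  exact mul_inv_eq_one.mp h

/-! ### `z` is central -/

lemma comm_s : s * z = z * s := by
  have l : s * z = t * u := by
    rw [zdef, show s * (s*t*u) = (s*s)*(t*u) from by group, hss, one_mul]
  have r : z * s = t * u := by
    rw [zdef, h4, show t*u*s*s = t*u*(s*s) from by group, hss, mul_one]
  rw [l, r]

lemma comm_t : t * z = z * t := by
  have l : t * z = t * (u * (s * t)) := by rw [zdef, h5]; group
  have r : z * t = t * (u * (s * t)) := by rw [zdef, h4]; group
  rw [l, r]

lemma comm_u : u * z = z * u := by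
  have l : u * z = u * (s * (t * u)) := by rw [zdef]; group
  have r : z * u = u * (s * (t * u)) := by rw [zdef, h5]; group
  rw [l, r]

lemma z_mem_center : z ∈ Subgroup.center G7 := by
  rw [Subgroup.mem_center_iff]
  intro g
  have hg : g ∈ Subgroup.closure (Set.range (PresentedGroup.of : Fin 3 → G7)) := by
    rw [PresentedGroup.closure_range_of]; exact Subgroup.mem_top g
  have : g ∈ Subgroup.centralizer {z} := by
    refine (Subgroup.closure_le _).mpr ?_ hg
    rintro x ⟨i, rfl⟩
    rw [SetLike.mem_coe, Subgroup.mem_centralizer_singleton_iff]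
    fin_cases i
    · exact comm_s
    · exact comm_t
    · exact comm_u
  exact Subgroup.mem_centralizer_singleton_iff.mp this

lemma zcomm : ∀ g : G7, z * g = g * z := fun g =>
  (Subgroup.mem_center_iff.mp z_mem_center g).symm

lemma cmz : ∀ a b : G7, a * (z * b) = z * (a * b) := fun a b => by
  rw [← mul_assoc, ← zcomm a, mul_assoc]

lemma cmz1 : ∀ a : G7, a * z = z * a := fun a => (zcomm a).symm

/-! ### The abstract computation giving `w ^ 12 = 1` -/

lemma aux {G : Type*} [Group G] (w x y : G) (hw : ∀ g, w * g = g * w)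
    (hx3 : x*(x*x) = w*(w*w)) (hy3 : y*(y*y) = w*(w*w))
    (hxy : (x*y)*(x*y) = w*w) : w^12 = 1 := by
  have cm : ∀ a b : G, a * (w * b) = w * (a * b) := fun a b => by
    rw [← mul_assoc, ← hw a, mul_assoc]
  have cm1 : ∀ a : G, a * w = w * a := fun a => (hw a).symm
  have cw : ∀ a : G, Commute w a := fun a => hw a
  have cmi1 : ∀ a : G, a * w⁻¹ = w⁻¹ * a := fun a => ((cw a).inv_left.eq).symm
  have cmi : ∀ a b : G, a * (w⁻¹ * b) = w⁻¹ * (a * b) := fun a b => by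
    rw [← mul_assoc, cmi1 a, mul_assoc]
  have h1 : y*(x*y) = x⁻¹*(w*w) := by
    have h : x*(y*(x*y)) = w*w := by rw [← hxy]; group
    rw [← h]; group
  have hyx : (y*x)*(y*x) = w*w := by
    have e : (y*x)*(y*x) = y*((x*y)*(x*y))*y⁻¹ := by group
    rw [e, hxy]
    simp only [mul_assoc, cm, cm1]; group
  have h2 : x*(y*x) = y⁻¹*(w*w) := by
    have h : y*(x*(y*x)) = w*w := by rw [← hyx]; group
    rw [← h]; group
  have hy2 : y*y = w*(w*(w*y⁻¹)) := by
    rw [show y*y = (y*(y*y))*y⁻¹ from by group, hy3]; group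
  have hx2 : x*x = w*(w*(w*x⁻¹)) := by
    rw [show x*x = (x*(x*x))*x⁻¹ from by group, hx3]; group
  have hA : x⁻¹*(x⁻¹*x⁻¹) = y*((x*(y⁻¹*(x*(y⁻¹*x))))*y) := by
    have e1 : (x⁻¹*(w*w))*((x⁻¹*(w*w))*(x⁻¹*(w*w))) = (y*(x*y))*((y*(x*y))*(y*(x*y))) := by
      rw [h1]
    have e2 : (y*(x*y))*((y*(x*y))*(y*(x*y))) = y*(x*((y*y)*(x*((y*y)*(x*y))))) := by group
    have e3 : y*(x*((y*y)*(x*((y*y)*(x*y))))) =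
        y*(x*((w*(w*(w*y⁻¹)))*(x*((w*(w*(w*y⁻¹)))*(x*y))))) := by rw [hy2]
    have e5 : (x⁻¹*(w*w))*((x⁻¹*(w*w))*(x⁻¹*(w*w))) =
        w*(w*(w*(w*(w*(w*(x⁻¹*(x⁻¹*x⁻¹))))))) := by
      simp only [mul_assoc, cm, cm1]
    have e6 : y*(x*((w*(w*(w*y⁻¹)))*(x*((w*(w*(w*y⁻¹)))*(x*y))))) =
        w*(w*(w*(w*(w*(w*(y*((x*(y⁻¹*(x*(y⁻¹*x))))*y))))))) := by
      simp only [mul_assoc, cm, cm1]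
    have big := e5.symm.trans ((e1.trans (e2.trans e3)).trans e6)
    replace big := mul_left_cancel big
    replace big := mul_left_cancel big
    replace big := mul_left_cancel big
    replace big := mul_left_cancel big
    replace big := mul_left_cancel big
    exact mul_left_cancel big
  have C1 : x*(x*(y*x)) = w*(w*(x*y⁻¹)) := by
    rw [h2]; simp only [mul_assoc, cm, cm1]
  have C2 : x*(y⁻¹*(x*(y⁻¹*x))) = w*(w*(x*(x*(y⁻¹*(x*x))))) := by
    have d1 : w*(w*(w*(w*(x*(y⁻¹*(x*(y⁻¹*x))))))) =
        (w*(w*(x*y⁻¹)))*((w*(w*(x*y⁻¹)))*x) := by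
      simp only [mul_assoc, cm, cm1]
    have d2 : (w*(w*(x*y⁻¹)))*((w*(w*(x*y⁻¹)))*x) = (x*(x*(y*x)))*((x*(x*(y*x)))*x) := by
      rw [C1]
    have d3 : (x*(x*(y*x)))*((x*(x*(y*x)))*x) = x*(x*(y*((x*(x*x))*(y*(x*x))))) := by group
    have d4 : x*(x*(y*((x*(x*x))*(y*(x*x))))) = x*(x*(y*((w*(w*w))*(y*(x*x))))) := by rw [hx3]
    have d5 : x*(x*(y*((w*(w*w))*(y*(x*x))))) = w*(w*(w*(x*(x*((y*y)*(x*x)))))) := by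
      simp only [mul_assoc, cm, cm1]
    have d6 : w*(w*(w*(x*(x*((y*y)*(x*x)))))) = w*(w*(w*(x*(x*((w*(w*(w*y⁻¹)))*(x*x)))))) := by
      rw [hy2]
    have d7 : w*(w*(w*(x*(x*((w*(w*(w*y⁻¹)))*(x*x)))))) =
        w*(w*(w*(w*(w*(w*(x*(x*(y⁻¹*(x*x))))))))) := by
      simp only [mul_assoc, cm, cm1]
    have big := d1.trans (d2.trans (d3.trans (d4.trans (d5.trans (d6.trans d7)))))
    replace big := mul_left_cancel big
    replace big := mul_left_cancel big
    replace big := mul_left_cancel big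
    exact mul_left_cancel big
  have hxi : x⁻¹*(x⁻¹*x⁻¹) = w⁻¹*(w⁻¹*w⁻¹) := by
    rw [show x⁻¹*(x⁻¹*x⁻¹) = (x*(x*x))⁻¹ from by group, hx3]; group
  have hE1 : w*(w*(y*(x*(x*(y⁻¹*(x*(x*y))))))) = w⁻¹*(w⁻¹*w⁻¹) := by
    have e : y*((w*(w*(x*(x*(y⁻¹*(x*x))))))*y) = w*(w*(y*(x*(x*(y⁻¹*(x*(x*y))))))) := by
      simp only [mul_assoc, cm, cm1]
    rw [← e, ← C2, ← hA, hxi]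
  have h2i : x⁻¹*(y⁻¹*x⁻¹) = w⁻¹*(w⁻¹*y) := by
    rw [show x⁻¹*(y⁻¹*x⁻¹) = (x*(y*x))⁻¹ from by group, h2]; group
  have hE2 : y*(x*(x*(y⁻¹*(x*(x*y))))) = w^7 := by
    have f1 : y*(x*(x*(y⁻¹*(x*(x*y))))) = y*((x*x)*(y⁻¹*((x*x)*y))) := by group
    have f2 : y*((x*x)*(y⁻¹*((x*x)*y))) =
        y*((w*(w*(w*x⁻¹)))*(y⁻¹*((w*(w*(w*x⁻¹)))*y))) := by rw [hx2]
    have f3 : y*((w*(w*(w*x⁻¹)))*(y⁻¹*((w*(w*(w*x⁻¹)))*y))) =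
        w*(w*(w*(w*(w*(w*(y*((x⁻¹*(y⁻¹*x⁻¹))*y))))))) := by
      simp only [mul_assoc, cm, cm1]
    have f4 : w*(w*(w*(w*(w*(w*(y*((x⁻¹*(y⁻¹*x⁻¹))*y))))))) =
        w*(w*(w*(w*(w*(w*(y*((w⁻¹*(w⁻¹*y))*y))))))) := by rw [h2i]
    have f5 : w*(w*(w*(w*(w*(w*(y*((w⁻¹*(w⁻¹*y))*y))))))) =
        w*(w*(w*(w*(y*(y*y))))) := by
      simp only [mul_assoc, cmi, cmi1]; group
    have f6 : w*(w*(w*(w*(y*(y*y))))) = w*(w*(w*(w*(w*(w*w))))) := by rw [hy3]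
    calc y*(x*(x*(y⁻¹*(x*(x*y))))) = w*(w*(w*(w*(w*(w*w))))) :=
          f1.trans (f2.trans (f3.trans (f4.trans (f5.trans f6))))
      _ = w^7 := by simp only [pow_succ, pow_zero, one_mul]; group
  have fin : w*(w*(w^7)) = w⁻¹*(w⁻¹*w⁻¹) := by rw [← hE2, hE1]
  have fin3 : (w*(w*w)) * (w*(w*(w^7))) = (w*(w*w)) * (w⁻¹*(w⁻¹*w⁻¹)) := by rw [fin]
  calc w^12 = (w*(w*w)) * (w*(w*(w^7))) := by
        simp only [pow_succ, pow_zero, one_mul]; group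
    _ = (w*(w*w)) * (w⁻¹*(w⁻¹*w⁻¹)) := fin3
    _ = 1 := by group

/-! ### Applying the computation in `G7` -/

lemma hu_eq : u = (s*t)⁻¹ * z := by rw [zdef]; group

lemma hus : u * s = t⁻¹ * z := by
  have h : t * (u * s) = z := by rw [zdef, h4]; group
  rw [← h]; group

lemma hx3G : (s*t)*((s*t)*(s*t)) = z*(z*z) := by
  have e1 : u*(u*u) = z*(z*(z*((s*t)⁻¹*((s*t)⁻¹*(s*t)⁻¹)))) := by
    rw [hu_eq]; simp only [mul_assoc, cmz, cmz1]
  have e2 : z*(z*(z*((s*t)⁻¹*((s*t)⁻¹*(s*t)⁻¹)))) = 1 := by rw [← e1]; exact huuu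
  have e3 : (z*(z*z)) * ((s*t)⁻¹*((s*t)⁻¹*(s*t)⁻¹)) = 1 := by rw [← e2]; group
  have e4 : z*(z*z) = ((s*t)⁻¹*((s*t)⁻¹*(s*t)⁻¹))⁻¹ := mul_eq_one_iff_eq_inv.mp e3
  rw [e4]; group

lemma hy3G : (u*s)*((u*s)*(u*s)) = z*(z*z) := by
  have e1 : (u*s)*((u*s)*(u*s)) = z*(z*(z*(t⁻¹*(t⁻¹*t⁻¹)))) := by
    rw [hus]; simp only [mul_assoc, cmz, cmz1]
  have e2 : t⁻¹*(t⁻¹*t⁻¹) = 1 := by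
    rw [show t⁻¹*(t⁻¹*t⁻¹) = (t*(t*t))⁻¹ from by group, httt]; group
  rw [e1, e2, mul_one]

lemma hxyG : ((s*t)*(u*s))*((s*t)*(u*s)) = z*z := by
  have hzs : (s*t)*(u*s) = z*s := by rw [zdef]; group
  rw [hzs]
  calc (z*s)*(z*s) = z*(z*(s*s)) := by simp only [mul_assoc, cmz, cmz1]
    _ = z*z := by rw [hss, mul_one]

lemma h12 : z^12 = 1 := aux z (s*t) (u*s) zcomm hx3G hy3G hxyG

/-! ### A matrix representation: `z` has order exactly 12 -/

def MS : (Matrix (Fin 2) (Fin 2) (ZMod 13))ˣ :=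
  ⟨!![0,1;1,0], !![0,1;1,0], by decide, by decide⟩
def MT : (Matrix (Fin 2) (Fin 2) (ZMod 13))ˣ :=
  ⟨!![0,2;5,4], !![10,8;7,0], by decide, by decide⟩
def MU : (Matrix (Fin 2) (Fin 2) (ZMod 13))ˣ :=
  ⟨!![3,7;0,1], !![9,2;0,1], by decide, by decide⟩

def mf : Fin 3 → (Matrix (Fin 2) (Fin 2) (ZMod 13))ˣ := ![MS, MT, MU]

lemma mf_rels : ∀ r ∈ rels, FreeGroup.lift mf r = 1 := by
  intro r hr
  simp only [rels, Set.mem_insert_iff, Set.mem_singleton_iff] at hr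
  rcases hr with rfl|rfl|rfl|rfl|rfl <;>
    · simp only [map_mul, map_pow, map_inv, FreeGroup.lift_apply_of]
      rw [Units.ext_iff]
      decide

def φ : G7 →* (Matrix (Fin 2) (Fin 2) (ZMod 13))ˣ := PresentedGroup.toGroup mf_rels

lemma φz : φ z = MS * MT * MU := by
  rw [zdef, map_mul, map_mul]
  have h1 : φ s = MS := PresentedGroup.toGroup.of mf_rels
  have h2 : φ t = MT := PresentedGroup.toGroup.of mf_rels
  have h3 : φ u = MU := PresentedGroup.toGroup.of mf_rels
  rw [h1, h2, h3]

lemma z6ne : z^6 ≠ 1 := by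
  intro h
  have h2 : (φ z)^6 = 1 := by rw [← map_pow, h, map_one]
  rw [φz, Units.ext_iff] at h2
  exact absurd h2 (by decide)

lemma z4ne : z^4 ≠ 1 := by
  intro h
  have h2 : (φ z)^4 = 1 := by rw [← map_pow, h, map_one]
  rw [φz, Units.ext_iff] at h2
  exact absurd h2 (by decide)

lemma hord : orderOf z = 12 := by
  have hdvd : orderOf z ∣ 12 := orderOf_dvd_of_pow_eq_one h12
  have h6 : ¬ orderOf z ∣ 6 := fun h => z6ne (orderOf_dvd_iff_pow_eq_one.mp h)
  have h4' : ¬ orderOf z ∣ 4 := fun h => z4ne (orderOf_dvd_iff_pow_eq_one.mp h)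
  have hle : orderOf z ≤ 12 := Nat.le_of_dvd (by norm_num) hdvd
  interval_cases h : orderOf z <;> revert hdvd h6 h4' <;> decide

/-! ### Permutation representation and a transversal of `⟨z⟩` -/

def pa : Equiv.Perm (Fin 4) := ⟨![1,0,3,2], ![1,0,3,2], by decide, by decide⟩
def pb : Equiv.Perm (Fin 4) := ⟨![1,2,0,3], ![2,0,1,3], by decide, by decide⟩
def pc : Equiv.Perm (Fin 4) := ⟨![0,2,3,1], ![0,3,1,2], by decide, by decide⟩

def pf : Fin 3 → Equiv.Perm (Fin 4) := ![pa, pb, pc]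

lemma pf_rels : ∀ r ∈ rels, FreeGroup.lift pf r = 1 := by
  intro r hr
  simp only [rels, Set.mem_insert_iff, Set.mem_singleton_iff] at hr
  rcases hr with rfl|rfl|rfl|rfl|rfl <;>
    · simp only [map_mul, map_pow, map_inv, FreeGroup.lift_apply_of]
      decide

def ρ : G7 →* Equiv.Perm (Fin 4) := PresentedGroup.toGroup pf_rels

lemma ρs : ρ s = pa := PresentedGroup.toGroup.of pf_rels
lemma ρt : ρ t = pb := PresentedGroup.toGroup.of pf_rels
lemma ρu : ρ u = pc := PresentedGroup.toGroup.of pf_rels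

lemma ρz1 : ρ z = 1 := by
  rw [zdef, map_mul, map_mul, ρs, ρt, ρu]; decide

/-! Auxiliary inverse facts -/

lemma hsinv : s = s⁻¹ := eq_inv_of_mul_eq_one_left hss
lemma htinv : t * t = t⁻¹ :=
  eq_inv_of_mul_eq_one_left (by rw [mul_assoc]; exact httt)
lemma huinv : u * u = u⁻¹ :=
  eq_inv_of_mul_eq_one_left (by rw [mul_assoc]; exact huuu)
lemma hu2 : u = t * (t * (s * z)) := by
  rw [hu_eq, mul_inv_rev, ← htinv, ← hsinv]
  group

lemma cmzi1 : ∀ a : G7, a * z⁻¹ = z⁻¹ * a := fun a => by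
  have h : Commute z a := zcomm a
  exact (h.inv_left.eq).symm

/-! The key exchange identities -/

lemma z3e : z^(3:ℤ) = z*(z*z) := by
  rw [show (3:ℤ) = ((3:ℕ):ℤ) from rfl, zpow_natCast]
  simp only [pow_succ, pow_zero, one_mul]; group
lemma zm3e : z^(-3:ℤ) = (z*(z*z))⁻¹ := by
  rw [show (-3:ℤ) = -((3:ℕ):ℤ) from rfl, zpow_neg, zpow_natCast]
  simp only [pow_succ, pow_zero, one_mul]; group

lemma hts3G : (t*s)*((t*s)*(t*s)) = z*(z*z) := by
  have e : (t*s)*((t*s)*(t*s)) = s⁻¹*((s*t)*((s*t)*(s*t)))*s := by group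
  rw [e, hx3G]
  calc s⁻¹*(z*(z*z))*s = z*(z*(z*(s⁻¹*s))) := by
        simp only [mul_assoc, cmz, cmz1]
    _ = z*(z*z) := by group

lemma eN1 : z*(z*z)*(t*t*s) = (s*t*s)*t := by
  rw [← hx3G]
  calc (s*t)*((s*t)*(s*t))*(t*t*s) = (s*t*s*t)*(s*((t*(t*t))*s)) := by group
    _ = (s*t*s*t)*(s*(1*s)) := by rw [httt]
    _ = (s*t*s*t)*(s*s) := by rw [one_mul]
    _ = (s*t*s*t)*1 := by rw [hss]
    _ = (s*t*s)*t := by rw [mul_one]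

lemma eN2 : z*(z*z)*(s*t*t) = (t*s*t)*s := by
  rw [← hts3G]
  calc (t*s)*((t*s)*(t*s))*(s*t*t) = (t*s*t*s)*(t*((s*s)*(t*t))) := by group
    _ = (t*s*t*s)*(t*(1*(t*t))) := by rw [hss]
    _ = (t*s*t*s)*(t*(t*t)) := by rw [one_mul]
    _ = (t*s*t*s)*1 := by rw [httt]
    _ = (t*s*t)*s := by rw [mul_one]

lemma eN3 : z*(z*z)*((s*t*t)*s) = t*s*t := by
  calc z*(z*z)*((s*t*t)*s) = (z*(z*z)*(s*t*t))*s := by group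
    _ = ((t*s*t)*s)*s := by rw [eN2]
    _ = (t*s*t)*(s*s) := by group
    _ = t*s*t := by rw [hss, mul_one]

lemma eN4 : z*(z*z)*((t*s*t*t)*s) = t*t*s*t := by
  calc z*(z*z)*((t*s*t*t)*s) = t*(z*(z*z)*((s*t*t)*s)) := by
        simp only [mul_assoc, cmz, cmz1]
    _ = t*(t*s*t) := by rw [eN3]
    _ = t*t*s*t := by group

lemma eN5 : z*(z*z)*(t*s*t*t) = (t*t*s*t)*s := by
  calc z*(z*z)*(t*s*t*t) = t*(z*(z*z)*(s*t*t)) := by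
        simp only [mul_assoc, cmz, cmz1]
    _ = t*((t*s*t)*s) := by rw [eN2]
    _ = (t*t*s*t)*s := by group

lemma eN6 : z*(z*z)*((t*t*s*t)*t) = s*t*s := by
  calc z*(z*z)*((t*t*s*t)*t) = (z*(z*z)*(t*t*s))*(t*t) := by group
    _ = ((s*t*s)*t)*(t*t) := by rw [eN1]
    _ = (s*t*s)*(t*(t*t)) := by group
    _ = (s*t*s)*1 := by rw [httt]
    _ = s*t*s := by rw [mul_one]

lemma N1 : (s*t*s)*t = z^(3:ℤ)*(t*t*s) := by rw [z3e, eN1]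
lemma N2 : (t*s*t)*s = z^(3:ℤ)*(s*t*t) := by rw [z3e, eN2]
lemma N3 : (s*t*t)*s = z^(-3:ℤ)*(t*s*t) := by rw [zm3e, ← eN3]; group
lemma N4 : (t*s*t*t)*s = z^(-3:ℤ)*(t*t*s*t) := by rw [zm3e, ← eN4]; group
lemma N5 : (t*t*s*t)*s = z^(3:ℤ)*(t*s*t*t) := by rw [z3e, eN5]
lemma N6 : (t*t*s*t)*t = z^(-3:ℤ)*(s*t*s) := by rw [zm3e, ← eN6]; group

/-! The transversal -/

def ws : Fin 12 → G7 :=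
  ![1, s, t, s*t, t*s, t*t, s*t*s, s*t*t, t*s*t, t*t*s, t*s*t*t, t*t*s*t]
def ps : Fin 12 → Equiv.Perm (Fin 4) :=
  ![1, pa, pb, pa*pb, pb*pa, pb*pb, pa*pb*pa, pa*pb*pb, pb*pa*pb, pb*pb*pa,
    pb*pa*pb*pb, pb*pb*pa*pb]

lemma stepS : ∀ i : Fin 12, ∃ j : Fin 12, ∃ e : ℤ,
    ps i * pa = ps j ∧ ws i * s = z^e * ws j := by
  intro i
  fin_cases i
  · refine ⟨1, 0, by decide, ?_⟩
    show (1:G7)*s = z^(0:ℤ)*s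
    rw [zpow_zero]
  · refine ⟨0, 0, by decide, ?_⟩
    show s*s = z^(0:ℤ)*1
    rw [zpow_zero, hss, one_mul]
  · refine ⟨4, 0, by decide, ?_⟩
    show t*s = z^(0:ℤ)*(t*s)
    rw [zpow_zero, one_mul]
  · refine ⟨6, 0, by decide, ?_⟩
    show (s*t)*s = z^(0:ℤ)*(s*t*s)
    rw [zpow_zero, one_mul]
  · refine ⟨2, 0, by decide, ?_⟩
    show (t*s)*s = z^(0:ℤ)*t
    rw [zpow_zero, one_mul, mul_assoc, hss, mul_one]
  · refine ⟨9, 0, by decide, ?_⟩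
    show (t*t)*s = z^(0:ℤ)*(t*t*s)
    rw [zpow_zero, one_mul]
  · refine ⟨3, 0, by decide, ?_⟩
    show (s*t*s)*s = z^(0:ℤ)*(s*t)
    rw [zpow_zero, one_mul, mul_assoc, hss, mul_one]
  · refine ⟨8, (-3 : ℤ), by decide, ?_⟩
    show (s*t*t)*s = z^(-3:ℤ)*(t*s*t)
    exact N3
  · refine ⟨7, (3 : ℤ), by decide, ?_⟩
    show (t*s*t)*s = z^(3:ℤ)*(s*t*t)
    exact N2
  · refine ⟨5, 0, by decide, ?_⟩
    show (t*t*s)*s = z^(0:ℤ)*(t*t)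
    rw [zpow_zero, one_mul, mul_assoc, hss, mul_one]
  · refine ⟨11, (-3 : ℤ), by decide, ?_⟩
    show (t*s*t*t)*s = z^(-3:ℤ)*(t*t*s*t)
    exact N4
  · refine ⟨10, (3 : ℤ), by decide, ?_⟩
    show (t*t*s*t)*s = z^(3:ℤ)*(t*s*t*t)
    exact N5

lemma stepT : ∀ i : Fin 12, ∃ j : Fin 12, ∃ e : ℤ,
    ps i * pb = ps j ∧ ws i * t = z^e * ws j := by
  intro i
  fin_cases i
  · refine ⟨2, 0, by decide, ?_⟩
    show (1:G7)*t = z^(0:ℤ)*t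
    rw [zpow_zero]
  · refine ⟨3, 0, by decide, ?_⟩
    show s*t = z^(0:ℤ)*(s*t)
    rw [zpow_zero, one_mul]
  · refine ⟨5, 0, by decide, ?_⟩
    show t*t = z^(0:ℤ)*(t*t)
    rw [zpow_zero, one_mul]
  · refine ⟨7, 0, by decide, ?_⟩
    show (s*t)*t = z^(0:ℤ)*(s*t*t)
    rw [zpow_zero, one_mul]
  · refine ⟨8, 0, by decide, ?_⟩
    show (t*s)*t = z^(0:ℤ)*(t*s*t)
    rw [zpow_zero, one_mul]
  · refine ⟨0, 0, by decide, ?_⟩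
    show (t*t)*t = z^(0:ℤ)*1
    rw [zpow_zero, one_mul, mul_assoc]
    exact httt
  · refine ⟨9, (3 : ℤ), by decide, ?_⟩
    show (s*t*s)*t = z^(3:ℤ)*(t*t*s)
    exact N1
  · refine ⟨1, 0, by decide, ?_⟩
    show (s*t*t)*t = z^(0:ℤ)*s
    rw [zpow_zero, one_mul, show (s*t*t)*t = s*(t*(t*t)) from by group, httt, mul_one]
  · refine ⟨10, 0, by decide, ?_⟩
    show (t*s*t)*t = z^(0:ℤ)*(t*s*t*t)
    rw [zpow_zero, one_mul]
  · refine ⟨11, 0, by decide, ?_⟩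
    show (t*t*s)*t = z^(0:ℤ)*(t*t*s*t)
    rw [zpow_zero, one_mul]
  · refine ⟨4, 0, by decide, ?_⟩
    show (t*s*t*t)*t = z^(0:ℤ)*(t*s)
    rw [zpow_zero, one_mul, show (t*s*t*t)*t = (t*s)*(t*(t*t)) from by group, httt, mul_one]
  · refine ⟨6, (-3 : ℤ), by decide, ?_⟩
    show (t*t*s*t)*t = z^(-3:ℤ)*(s*t*s)
    exact N6

def P (g : G7) : Prop := ∃ i : Fin 12, ∃ k : ℤ, ρ g = ps i ∧ g = z^k * ws i

lemma PmulS {x : G7} (hx : P x) : P (x * s) := by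
  obtain ⟨i, k, hρ, hw⟩ := hx
  obtain ⟨j, e, hp, hwd⟩ := stepS i
  refine ⟨j, k + e, ?_, ?_⟩
  · rw [map_mul, hρ, ρs, hp]
  · rw [hw, mul_assoc, hwd, ← mul_assoc, ← zpow_add]

lemma PmulT {x : G7} (hx : P x) : P (x * t) := by
  obtain ⟨i, k, hρ, hw⟩ := hx
  obtain ⟨j, e, hp, hwd⟩ := stepT i
  refine ⟨j, k + e, ?_, ?_⟩
  · rw [map_mul, hρ, ρt, hp]
  · rw [hw, mul_assoc, hwd, ← mul_assoc, ← zpow_add]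

lemma PmulZ {x : G7} (hx : P x) : P (x * z) := by
  obtain ⟨i, k, hρ, hw⟩ := hx
  refine ⟨i, k + 1, ?_, ?_⟩
  · rw [map_mul, hρ, ρz1, mul_one]
  · rw [hw, mul_assoc, cmz1 (ws i), ← mul_assoc, ← zpow_add_one]

lemma PmulZinv {x : G7} (hx : P x) : P (x * z⁻¹) := by
  obtain ⟨i, k, hρ, hw⟩ := hx
  refine ⟨i, k - 1, ?_, ?_⟩
  · rw [map_mul, hρ, map_inv, ρz1, inv_one, mul_one]
  · rw [hw, mul_assoc, cmzi1 (ws i), ← mul_assoc, ← zpow_sub_one]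

lemma PmulU {x : G7} (hx : P x) : P (x * u) := by
  have e : x * u = (((x*t)*t)*s)*z := by rw [hu2]; group
  rw [e]
  exact PmulZ (PmulS (PmulT (PmulT hx)))

lemma PmulSinv {x : G7} (hx : P x) : P (x * s⁻¹) := by
  rw [← hsinv]; exact PmulS hx

lemma PmulTinv {x : G7} (hx : P x) : P (x * t⁻¹) := by
  rw [← htinv, ← mul_assoc]; exact PmulT (PmulT hx)

lemma PmulUinv {x : G7} (hx : P x) : P (x * u⁻¹) := by
  rw [← huinv, ← mul_assoc]; exact PmulU (PmulU hx)

lemma cover : ∀ g : G7, P g := by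
  intro g
  have hg : g ∈ Subgroup.closure (Set.range (PresentedGroup.of : Fin 3 → G7)) := by
    rw [PresentedGroup.closure_range_of]; exact Subgroup.mem_top g
  refine Subgroup.closure_induction_right (p := fun x _ => P x) ?_ ?_ ?_ hg
  · exact ⟨0, 0, by rw [map_one]; decide, by rw [zpow_zero, one_mul]; rfl⟩
  · rintro x hx yy ⟨iy, rfl⟩ px
    fin_cases iy
    · exact PmulS px
    · exact PmulT px
    · exact PmulU px
  · rintro x hx yy ⟨iy, rfl⟩ px
    fin_cases iy
    · exact PmulSinv px
    · exact PmulTinv px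
    · exact PmulUinv px

lemma center_le : Subgroup.center G7 ≤ Subgroup.zpowers z := by
  intro g hg
  obtain ⟨i, k, hρ, hw⟩ := cover g
  have hcs : ρ g * pa = pa * ρ g := by
    calc ρ g * pa = ρ (g*s) := by rw [map_mul, ρs]
      _ = ρ (s*g) := by rw [Subgroup.mem_center_iff.mp hg s]
      _ = pa * ρ g := by rw [map_mul, ρs]
  have hct : ρ g * pb = pb * ρ g := by
    calc ρ g * pb = ρ (g*t) := by rw [map_mul, ρt]
      _ = ρ (t*g) := by rw [Subgroup.mem_center_iff.mp hg t]
      _ = pb * ρ g := by rw [map_mul, ρt]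
  have hi : i = 0 := by
    have key : ∀ j : Fin 12, ps j * pa = pa * ps j → ps j * pb = pb * ps j → j = 0 := by decide
    exact key i (hρ ▸ hcs) (hρ ▸ hct)
  rw [hi] at hw
  refine Subgroup.mem_zpowers_iff.mpr ⟨k, ?_⟩
  rw [hw]
  exact (mul_one _).symm

theorem statement0 :
    z ∈ Subgroup.center G7 ∧ orderOf z = 12 ∧
    Subgroup.center G7 = Subgroup.zpowers z :=
  ⟨z_mem_center, hord,
    le_antisymm center_le (Subgroup.zpowers_le.mpr z_mem_center)⟩

end Tetra
end

section
/- For every natural number α and all indices i₁, i₂ ∈ {1, …, l}, the recursion formula (A^{α+m})_{i₁,i₂} = Σ_{p=0}^{m-1} Σ_{q=1}^{l} ζ^p_{i₁,q} · (A^{α+p})_{q,i₂} holds; that is, A^{α+m} = Σ_{p=0}^{m-1} Z^p · A^{α+p}, where Z^p is the l×l matrix (ζ^p_{i,q}). -/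
open scoped BigOperators

theorem statement18 {R H : Type*} [CommRing R] [Ring H] [Algebra R H]
    (z : H) (hz : ∀ h : H, z * h = h * z)
    (m l : ℕ) (hm : 1 ≤ m) (hl : 1 ≤ l)
    (y : Fin l → H) (τ : H →ₗ[R] R)
    (ζ : Fin m → Fin l → Fin l → R)
    (hζ : ∀ i : Fin l,
      z ^ m * y i = ∑ p : Fin m, ∑ q : Fin l, ζ p i q • (z ^ (p : ℕ) * y q))
    (A : ℕ → Matrix (Fin l) (Fin l) R)
    (hA : ∀ (α : ℕ) (i₁ i₂ : Fin l), A α i₁ i₂ = τ (z ^ α * y i₁ * y i₂)) :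
    ∀ (α : ℕ),
      (∀ i₁ i₂ : Fin l,
        A (α + m) i₁ i₂ = ∑ p : Fin m, ∑ q : Fin l, ζ p i₁ q * A (α + (p : ℕ)) q i₂) ∧
      A (α + m) = ∑ p : Fin m, (Matrix.of fun i q' => ζ p i q') * A (α + (p : ℕ)) := by
  intro α
  have key : ∀ i₁ i₂ : Fin l,
      A (α + m) i₁ i₂ = ∑ p : Fin m, ∑ q : Fin l, ζ p i₁ q * A (α + (p : ℕ)) q i₂ := by
    intro i₁ i₂
    rw [hA]
    have h1 : z ^ (α + m) * y i₁ * y i₂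
        = ∑ p : Fin m, ∑ q : Fin l, ζ p i₁ q • (z ^ (α + (p : ℕ)) * y q * y i₂) := by
      rw [pow_add, mul_assoc (z ^ α), hζ i₁]
      rw [Finset.mul_sum, Finset.sum_mul]
      refine Finset.sum_congr rfl fun p _ => ?_
      rw [Finset.mul_sum, Finset.sum_mul]
      refine Finset.sum_congr rfl fun q _ => ?_
      rw [mul_smul_comm, smul_mul_assoc, pow_add]; simp [mul_assoc]
    rw [h1]
    simp [map_sum, hA, map_smul, smul_eq_mul]
  refine ⟨key, ?_⟩
  ext i₁ i₂
  simpa [Matrix.sum_apply, Matrix.mul_apply] using key i₁ i₂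
end

section
/- If the matrices A⁰, A¹, …, A^{m−1} are all symmetric, then the matrix A^k is symmetric for every k with 0 ≤ k ≤ 2m−2; consequently the (m·l)×(m·l) block matrix A whose ((k₁,i₁),(k₂,i₂))-entry is τ(z^{k₁+k₂} · y_{i₁} · y_{i₂}) for 0 ≤ k₁, k₂ ≤ m−1 is symmetric. -/
open scoped BigOperators

theorem statement19 {R H : Type*} [CommRing R] [Ring H] [Algebra R H]
    (z : H) (hz : ∀ h : H, z * h = h * z)
    (m l : ℕ) (hm : 1 ≤ m) (hl : 1 ≤ l)
    (y : Fin l → H) (τ : H →ₗ[R] R)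
    (ζ : Fin m → Fin l → Fin l → R)
    (hζ : ∀ i : Fin l,
      z ^ m * y i = ∑ p : Fin m, ∑ q : Fin l, ζ p i q • (z ^ (p : ℕ) * y q))
    (A : ℕ → Matrix (Fin l) (Fin l) R)
    (hA : ∀ (α : ℕ) (i₁ i₂ : Fin l), A α i₁ i₂ = τ (z ^ α * y i₁ * y i₂))
    (hsym : ∀ k < m, (A k).IsSymm) :
    (∀ k ≤ 2 * m - 2, (A k).IsSymm) ∧
    (Matrix.of fun p q : Fin m × Fin l =>
      τ (z ^ ((p.1 : ℕ) + (q.1 : ℕ)) * y p.2 * y q.2)).IsSymm := by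
  have hzc : ∀ (n : ℕ) (h : H), z ^ n * h = h * z ^ n := fun n h =>
    (Commute.pow_left (hz h) n)
  -- computation 1
  have comp1 : ∀ (j : ℕ) (i1 i2 : Fin l),
      τ (z ^ (m + j) * y i1 * y i2)
        = ∑ p : Fin m, ∑ q : Fin l, ζ p i1 q * τ (z ^ (j + (p : ℕ)) * y q * y i2) := by
    intro j i1 i2
    have h1 : z ^ (m + j) * y i1 * y i2
        = ∑ p : Fin m, ∑ q : Fin l, ζ p i1 q • (z ^ (j + (p : ℕ)) * y q * y i2) := by
      have : z ^ (m + j) * y i1 * y i2 = z ^ j * (z ^ m * y i1) * y i2 := by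
        rw [pow_add, pow_mul_comm]; simp [mul_assoc]
      rw [this, hζ i1]
      rw [Finset.mul_sum, Finset.sum_mul]
      refine Finset.sum_congr rfl fun p _ => ?_
      rw [Finset.mul_sum, Finset.sum_mul]
      refine Finset.sum_congr rfl fun q _ => ?_
      rw [mul_smul_comm, smul_mul_assoc, pow_add]
      congr 1
      simp [mul_assoc]
    rw [h1, map_sum]
    refine Finset.sum_congr rfl fun p _ => ?_
    rw [map_sum]
    refine Finset.sum_congr rfl fun q _ => ?_
    rw [map_smul, smul_eq_mul]
  -- computation 2
  have comp2 : ∀ (j : ℕ) (i1 i2 : Fin l),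
      τ (z ^ (m + j) * y i2 * y i1)
        = ∑ p : Fin m, ∑ q : Fin l, ζ p i1 q * τ (z ^ (j + (p : ℕ)) * y i2 * y q) := by
    intro j i1 i2
    have h1 : z ^ (m + j) * y i2 * y i1
        = ∑ p : Fin m, ∑ q : Fin l, ζ p i1 q • (z ^ (j + (p : ℕ)) * y i2 * y q) := by
      have : z ^ (m + j) * y i2 * y i1 = z ^ j * y i2 * (z ^ m * y i1) := by
        rw [pow_add, pow_mul_comm, mul_assoc (z ^ j) (z ^ m) (y i2), hzc m (y i2)]
        simp [mul_assoc]
      rw [this, hζ i1]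
      rw [Finset.mul_sum]
      refine Finset.sum_congr rfl fun p _ => ?_
      rw [Finset.mul_sum]
      refine Finset.sum_congr rfl fun q _ => ?_
      rw [mul_smul_comm, pow_add]
      congr 1
      rw [show z ^ j * y i2 * (z ^ (p : ℕ) * y q) = (z ^ j * (y i2 * z ^ (p : ℕ))) * y q by
        simp [mul_assoc], ← hzc (p : ℕ) (y i2)]
      simp [mul_assoc]
    rw [h1, map_sum]
    refine Finset.sum_congr rfl fun p _ => ?_
    rw [map_sum]
    refine Finset.sum_congr rfl fun q _ => ?_
    rw [map_smul, smul_eq_mul]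
  have main : ∀ k, k ≤ 2 * m - 2 → (A k).IsSymm := by
    intro k
    induction k using Nat.strong_induction_on with
    | _ k ih =>
      intro hk
      by_cases hkm : k < m
      · exact hsym k hkm
      · push_neg at hkm
        obtain ⟨j, rfl⟩ : ∃ j, k = m + j := ⟨k - m, by omega⟩
        rw [Matrix.IsSymm]
        ext i2 i1
        rw [Matrix.transpose_apply, hA, hA, comp1 j i1 i2, comp2 j i1 i2]
        refine Finset.sum_congr rfl fun p _ => Finset.sum_congr rfl fun q _ => ?_
        have hple : (p : ℕ) < m := p.isLt
        have hih : (A (j + (p : ℕ))).IsSymm :=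
          ih (j + (p : ℕ)) (by omega) (by omega)
        rw [← hA, ← hA, hih.apply]
  refine ⟨main, ?_⟩
  rw [Matrix.IsSymm]
  ext ⟨k2, i2⟩ ⟨k1, i1⟩
  rw [Matrix.transpose_apply]
  simp only [Matrix.of_apply]
  have h := (main ((k1 : ℕ) + (k2 : ℕ)) (by omega)).apply i2 i1
  rw [hA, hA] at h
  rw [h, Nat.add_comm (k2 : ℕ) (k1 : ℕ)]
end
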